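/- For n ≥ 2, the quotient vector space ker μ / (ker μ ∩ ker μ°), where μ, μ° : M_n ⊗ M_n → M_n are the multiplication and opposite multiplication maps, has dimension n² − 1. -/

import Mathlib

open TensorProduct

/-- The multiplication map `μ : Mₙ ⊗ Mₙ → Mₙ`, `a ⊗ b ↦ a * b`. -/
noncomputable def matMul (n : ℕ) :
    Matrix (Fin n) (Fin n) ℂ ⊗[ℂ] Matrix (Fin n) (Fin n) ℂ →ₗ[ℂ] Matrix (Fin n) (Fin n) ℂ :=
  LinearMap.mul' ℂ _

/-- The opposite multiplication map `μ° : Mₙ ⊗ Mₙ → Mₙ`, `a ⊗ b ↦ b * a`. -/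
noncomputable def matMulOp (n : ℕ) :
    Matrix (Fin n) (Fin n) ℂ ⊗[ℂ] Matrix (Fin n) (Fin n) ℂ →ₗ[ℂ] Matrix (Fin n) (Fin n) ℂ :=
  (LinearMap.mul' ℂ _).comp (TensorProduct.comm ℂ _ _).toLinearMap

/-- The quotient `ker μ / (ker μ ∩ ker μ°)`, realized as the image of `ker μ` in the
quotient of `Mₙ ⊗ Mₙ` by `ker μ ∩ ker μ°`. -/
noncomputable def kerMulQuot (n : ℕ) :=
  Submodule.map (LinearMap.ker (matMul n) ⊓ LinearMap.ker (matMulOp n)).mkQ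
    (LinearMap.ker (matMul n))

open Matrix

/-- The pair map `x ↦ (μ x, μ° x)`. -/
noncomputable def pairMap (n : ℕ) :
    Matrix (Fin n) (Fin n) ℂ ⊗[ℂ] Matrix (Fin n) (Fin n) ℂ →ₗ[ℂ]
      Matrix (Fin n) (Fin n) ℂ × Matrix (Fin n) (Fin n) ℂ :=
  (matMul n).prod (matMulOp n)

/-- The trace-difference functional `(X, Y) ↦ tr X - tr Y`. -/
noncomputable def trDiff (n : ℕ) :
    Matrix (Fin n) (Fin n) ℂ × Matrix (Fin n) (Fin n) ℂ →ₗ[ℂ] ℂ :=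
  (Matrix.traceLinearMap (Fin n) ℂ ℂ).comp (LinearMap.fst ℂ _ _) -
    (Matrix.traceLinearMap (Fin n) ℂ ℂ).comp (LinearMap.snd ℂ _ _)

lemma matMul_tmul {n : ℕ} (a b : Matrix (Fin n) (Fin n) ℂ) :
    matMul n (a ⊗ₜ b) = a * b := rfl

lemma matMulOp_tmul {n : ℕ} (a b : Matrix (Fin n) (Fin n) ℂ) :
    matMulOp n (a ⊗ₜ b) = b * a := rfl

lemma range_pairMap (n : ℕ) (hn : 0 < n) :
    LinearMap.range (pairMap n) = LinearMap.ker (trDiff n) := by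
  haveI : NeZero n := ⟨hn.ne'⟩
  apply le_antisymm
  · rintro _ ⟨x, rfl⟩
    simp only [LinearMap.mem_ker]
    induction x using TensorProduct.induction_on with
    | zero => simp
    | tmul a b =>
        show trDiff n (a * b, b * a) = 0
        simp only [trDiff, LinearMap.sub_apply, LinearMap.comp_apply, LinearMap.fst_apply,
          LinearMap.snd_apply, Matrix.traceLinearMap_apply]
        rw [Matrix.trace_mul_comm, sub_self]
    | add x y hx hy => rw [map_add, map_add, hx, hy, add_zero]
  · rintro ⟨X, Y⟩ hXY
    have htr : Matrix.trace X = Matrix.trace Y := by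
      simpa [trDiff, sub_eq_zero] using hXY
    set C : Matrix (Fin n) (Fin n) ℂ := Y - X with hC
    refine ⟨X ⊗ₜ 1 + ∑ i : Fin n, ∑ j : Fin n,
      C i j • ((Matrix.single (0 : Fin n) j 1) ⊗ₜ[ℂ] (Matrix.single i (0 : Fin n) 1)), ?_⟩
    have h1 : matMul n (X ⊗ₜ 1 + ∑ i : Fin n, ∑ j : Fin n,
        C i j • ((Matrix.single (0 : Fin n) j 1) ⊗ₜ[ℂ] (Matrix.single i (0 : Fin n) 1))) = X := by
      rw [map_add, matMul_tmul, mul_one]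
      have : ∀ i : Fin n, ∑ j : Fin n,
          C i j • matMul n ((Matrix.single (0 : Fin n) j 1) ⊗ₜ[ℂ] (Matrix.single i (0 : Fin n) 1))
          = C i i • Matrix.single (0 : Fin n) (0 : Fin n) (1 : ℂ) := by
        intro i
        rw [Finset.sum_eq_single i]
        · rw [matMul_tmul, single_mul_single_same, one_mul]
        · intro j _ hj
          rw [matMul_tmul, single_mul_single_of_ne (h := hj), smul_zero]
        · simp
      rw [map_sum]
      simp only [map_sum, _root_.map_smul, this]
      rw [← Finset.sum_smul]
      have : ∑ i : Fin n, C i i = Matrix.trace C := rfl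
      rw [this, hC, Matrix.trace_sub, htr, sub_self, zero_smul, add_zero]
    have h2 : matMulOp n (X ⊗ₜ 1 + ∑ i : Fin n, ∑ j : Fin n,
        C i j • ((Matrix.single (0 : Fin n) j 1) ⊗ₜ[ℂ] (Matrix.single i (0 : Fin n) 1))) = Y := by
      rw [map_add, matMulOp_tmul, one_mul, map_sum]
      have : ∀ i j : Fin n,
          C i j • matMulOp n ((Matrix.single (0 : Fin n) j 1) ⊗ₜ[ℂ] (Matrix.single i (0 : Fin n) 1))
          = Matrix.single i j (C i j) := by
        intro i j
        rw [matMulOp_tmul, single_mul_single_same, one_mul, smul_single, smul_eq_mul,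
          mul_one]
      simp only [map_sum, _root_.map_smul, this]
      rw [← matrix_eq_sum_single C, hC]
      abel
    exact Prod.ext h1 h2

lemma trDiff_surjective (n : ℕ) (hn : 0 < n) : Function.Surjective (trDiff n) := by
  intro y
  refine ⟨(y / n) • (1, 0), ?_⟩
  have h1 : trDiff n (1, 0) = n := by
    simp [trDiff, Matrix.trace_one]
  rw [LinearMap.map_smul, h1, smul_eq_mul, div_mul_cancel₀]
  exact_mod_cast hn.ne'

set_option maxHeartbeats 1000000 in
set_option synthInstance.maxHeartbeats 400000 in
theorem stmt11 (n : ℕ) (hn : 2 ≤ n) :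
    Module.finrank ℂ ↥(kerMulQuot n) = n ^ 2 - 1 := by
  have hn0 : 0 < n := by omega
  -- finrank of the big space
  have hM : Module.finrank ℂ (Matrix (Fin n) (Fin n) ℂ) = n ^ 2 := by
    simp [Module.finrank_matrix]; ring
  have hT : Module.finrank ℂ (Matrix (Fin n) (Fin n) ℂ ⊗[ℂ] Matrix (Fin n) (Fin n) ℂ)
      = n ^ 2 * n ^ 2 := by
    rw [Module.finrank_tensorProduct, hM]
  -- finrank of ker μ
  have hmul_surj : Function.Surjective (matMul n) := fun a => ⟨a ⊗ₜ 1, by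
    rw [matMul_tmul, mul_one]⟩
  have hp : Module.finrank ℂ ↥(LinearMap.ker (matMul n)) + n ^ 2 = n ^ 2 * n ^ 2 := by
    have := LinearMap.finrank_range_add_finrank_ker (matMul n)
    rw [LinearMap.range_eq_top.mpr hmul_surj, finrank_top, hM, hT] at this
    omega
  -- finrank of ker μ ⊓ ker μ°
  have hkerPair : LinearMap.ker (pairMap n)
      = LinearMap.ker (matMul n) ⊓ LinearMap.ker (matMulOp n) := LinearMap.ker_prod _ _
  have hrange : Module.finrank ℂ ↥(LinearMap.range (pairMap n)) + 1 = 2 * n ^ 2 := by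
    rw [range_pairMap n hn0]
    have h1 := LinearMap.finrank_range_add_finrank_ker (trDiff n)
    rw [LinearMap.range_eq_top.mpr (trDiff_surjective n hn0), finrank_top,
      Module.finrank_self, Module.finrank_prod, hM] at h1
    omega
  have hq : Module.finrank ℂ ↥(LinearMap.ker (matMul n) ⊓ LinearMap.ker (matMulOp n))
      + (2 * n ^ 2 - 1) = n ^ 2 * n ^ 2 := by
    have := LinearMap.finrank_range_add_finrank_ker (pairMap n)
    rw [hkerPair, hT] at this
    omega
  -- rank-nullity for the restricted quotient map
  have hqp : LinearMap.ker (matMul n) ⊓ LinearMap.ker (matMulOp n) ≤ LinearMap.ker (matMul n) :=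
    inf_le_left
  letI hACG : AddCommGroup ↥(LinearMap.ker (matMul n)) :=
    Submodule.addCommGroup (LinearMap.ker (matMul n))
  have hg : Module.finrank ℂ ↥(LinearMap.range
        ((LinearMap.ker (matMul n) ⊓ LinearMap.ker (matMulOp n)).mkQ.comp
          (LinearMap.ker (matMul n)).subtype)) +
      Module.finrank ℂ ↥(LinearMap.ker
        ((LinearMap.ker (matMul n) ⊓ LinearMap.ker (matMulOp n)).mkQ.comp
          (LinearMap.ker (matMul n)).subtype)) =
      Module.finrank ℂ ↥(LinearMap.ker (matMul n)) :=
    LinearMap.finrank_range_add_finrank_ker _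
  rw [LinearMap.range_comp, Submodule.range_subtype, LinearMap.ker_comp, Submodule.ker_mkQ] at hg
  have hcomap : Module.finrank ℂ ↥(Submodule.comap (LinearMap.ker (matMul n)).subtype
        (LinearMap.ker (matMul n) ⊓ LinearMap.ker (matMulOp n)))
      = Module.finrank ℂ ↥(LinearMap.ker (matMul n) ⊓ LinearMap.ker (matMulOp n)) :=
    (Submodule.comapSubtypeEquivOfLe hqp).finrank_eq
  rw [hcomap] at hg
  have hQ : Module.finrank ℂ ↥(kerMulQuot n)
      + Module.finrank ℂ ↥(LinearMap.ker (matMul n) ⊓ LinearMap.ker (matMulOp n))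
      = Module.finrank ℂ ↥(LinearMap.ker (matMul n)) := hg
  have hn2 : 2 ≤ n ^ 2 := by nlinarith
  omega
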